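/- Let u : ℝ^N × [0,∞) → ℝ be continuous and, for each (x,t), suppose λ ↦ dist((x,t), {u ≤ λ}) is non-increasing in λ (here dist is Euclidean distance in ℝ^{N+1} to the closed sublevel set K_λ := {(x,t) : u(x,t) ≤ λ}). Then there is a countable set N₁ ⊂ ℝ such that for every λ₀ ∉ N₁ and every point p ∈ ℝ^N × [0,∞), the map λ ↦ dist(p, K_λ) is continuous at λ₀. -/
import Mathlib


open Set

/-- For a continuous function `u` on `ℝ^N × [0,∞)` with closed sublevel sets
`K λ`, if `λ ↦ dist(p, K λ)` is non-increasing for each point `p`, then there is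
a countable set `N₁ ⊆ ℝ` outside of which `λ ↦ dist(p, K λ)` is continuous at
`λ₀` simultaneously for all points `p`. -/
theorem countable_exceptional_levels {N : ℕ}
    (u : EuclideanSpace ℝ (Fin N) × ℝ → ℝ) (hu : Continuous u)
    (K : ℝ → Set (EuclideanSpace ℝ (Fin N) × ℝ))
    (hK : ∀ lam, K lam = {p | 0 ≤ p.2 ∧ u p ≤ lam})
    (hmono : ∀ p, Antitone (fun lam => Metric.infDist p (K lam))) :
    ∃ S : Set ℝ, S.Countable ∧ ∀ lam₀ ∉ S,
      ∀ p : EuclideanSpace ℝ (Fin N) × ℝ,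
        ContinuousAt (fun lam => Metric.infDist p (K lam)) lam₀ := by
  obtain ⟨D, hDc, hDd⟩ :=
    TopologicalSpace.exists_countable_dense (EuclideanSpace ℝ (Fin N) × ℝ)
  refine ⟨⋃ q ∈ D, {lam | ¬ ContinuousAt (fun lam => Metric.infDist q (K lam)) lam},
    hDc.biUnion fun q _ => (hmono q).countable_not_continuousAt, ?_⟩
  intro lam₀ hlam₀ p
  rw [Metric.continuousAt_iff]
  intro ε hε
  obtain ⟨q, hq, hqD⟩ := Metric.dense_iff.mp hDd p (ε / 3) (by linarith)
  rw [Metric.mem_ball] at hq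
  have hqc : ContinuousAt (fun lam => Metric.infDist q (K lam)) lam₀ := by
    by_contra h
    exact hlam₀ (Set.mem_biUnion hqD h)
  rw [Metric.continuousAt_iff] at hqc
  obtain ⟨δ, hδ, hδ'⟩ := hqc (ε / 3) (by linarith)
  refine ⟨δ, hδ, fun {lam} hlam => ?_⟩
  have h1 : ∀ μ, |Metric.infDist p (K μ) - Metric.infDist q (K μ)| ≤ dist p q := by
    intro μ
    have a1 : Metric.infDist p (K μ) ≤ Metric.infDist q (K μ) + dist p q :=
      Metric.infDist_le_infDist_add_dist
    have a2 : Metric.infDist q (K μ) ≤ Metric.infDist p (K μ) + dist p q := by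
      rw [dist_comm]; exact Metric.infDist_le_infDist_add_dist
    rw [abs_sub_le_iff]; constructor <;> linarith
  have h2 := hδ' hlam
  rw [Real.dist_eq] at h2 ⊢
  have hpq : dist p q < ε / 3 := by rwa [dist_comm]
  have t1 := abs_sub_le (Metric.infDist p (K lam)) (Metric.infDist q (K lam))
    (Metric.infDist p (K lam₀))
  have t2 := abs_sub_le (Metric.infDist q (K lam)) (Metric.infDist q (K lam₀))
    (Metric.infDist p (K lam₀))
  have e1 := h1 lam
  have e2 := h1 lam₀
  rw [abs_sub_comm] at e2
  linarith
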